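/- Let 0 < s < 1 and let x ≥ y ≥ 0 with x ≠ 0. Then x^s − y^s ≤ 2(x − y)/(x^{1−s} + y^{1−s}). -/
import Mathlib

/-- Lemma B.1 i): for `0 < s < 1` and `x ≥ y ≥ 0` with `x ≠ 0`,
`x^s − y^s ≤ 2(x − y)/(x^{1−s} + y^{1−s})`. -/
theorem rpow_sub_rpow_le (s x y : ℝ) (hs : 0 < s) (hs1 : s < 1)
    (hy : 0 ≤ y) (hxy : y ≤ x) (hx : x ≠ 0) :
    x ^ s - y ^ s ≤ 2 * (x - y) / (x ^ (1 - s) + y ^ (1 - s)) := by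
  have hx0 : 0 < x := lt_of_le_of_ne (hy.trans hxy) (Ne.symm hx)
  have hd : 0 < x ^ (1 - s) + y ^ (1 - s) := by positivity
  rw [le_div_iff₀ hd]
  have hxx : x ^ s * x ^ (1 - s) = x := by
    rw [← Real.rpow_add hx0]; norm_num
  have hyy : y ^ s * y ^ (1 - s) = y := by
    rw [← Real.rpow_add' hy (by norm_num : s + (1 - s) ≠ 0)]; norm_num
  have hpow : y ^ (1 - s) ≤ x ^ (1 - s) :=
    Real.rpow_le_rpow hy hxy (by linarith)
  have hpow2 : y ^ s ≤ x ^ s := Real.rpow_le_rpow hy hxy hs.le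
  have h1 : x ^ s * y ^ (1 - s) ≤ x := by
    calc x ^ s * y ^ (1 - s) ≤ x ^ s * x ^ (1 - s) := by
          gcongr
      _ = x := hxx
  have h2 : y ≤ y ^ s * x ^ (1 - s) := by
    calc y = y ^ s * y ^ (1 - s) := hyy.symm
      _ ≤ y ^ s * x ^ (1 - s) := by
          gcongr
  nlinarith [hxx, hyy, h1, h2]
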